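/- arXiv:hep-th/9706120 — 2 statements merged into one kernel-verified Lean document; each statement's English description precedes it below -/
import Mathlib

section
/- For 0 < x < 1 and every natural number j, the function S_j(x) = Σ_{k=1}^∞ ((j+k+1)!/(k+1)!) σ_k x^k satisfies (1-x)^{j+1} S_j(x) = P_j(x) + Q_j(x) log(1-x), where P_j(x)/(j+1)! = (j x / 2)(1-x)^{j-1} + (j(j-1)/4) x^2 (1-x)^{j-2} + Σ_{p=3}^{j} (j!/((p+1)! (j-p)!)) [1/p + 1/(p-1) + Σ_{q=1}^{p-2} 1/(p-q-1)] x^p (1-x)^{j-p}, and x Q_j(x)/(j+1)! = -(1/(j+1)) [1 - (1-x)^{j+1}]. -/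
open Finset

/-- The k-th harmonic number σ_k = Σ_{m=1}^k 1/m. -/
noncomputable def sigma_harm (k : ℕ) : ℝ := ∑ m ∈ Finset.Icc 1 k, (1 : ℝ) / m

lemma sigma_harm_zero : sigma_harm 0 = 0 := by simp [sigma_harm]

lemma sigma_harm_succ (k : ℕ) : sigma_harm (k + 1) = sigma_harm k + 1 / (k + 1 : ℝ) := by
  rw [sigma_harm, sigma_harm, Finset.sum_Icc_succ_top (by omega)]
  push_cast; ring

/-- Key combinatorial identity. -/
lemma comb_key (r n : ℕ) :
    ∑ m ∈ Finset.Icc 1 n, ((n - m + r).choose r : ℝ) / m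
      = ((n + r).choose r : ℝ) * (sigma_harm (n + r) - sigma_harm r) := by
  induction r generalizing n with
  | zero => simp [sigma_harm_zero, sigma_harm]
  | succ r ihr =>
    induction n with
    | zero => simp
    | succ n ihn =>
      have hrec : ∑ m ∈ Finset.Icc 1 (n + 1), ((n + 1 - m + (r + 1)).choose (r + 1) : ℝ) / m
          = (∑ m ∈ Finset.Icc 1 n, ((n - m + (r + 1)).choose (r + 1) : ℝ) / m)
            + ∑ m ∈ Finset.Icc 1 (n + 1), ((n + 1 - m + r).choose r : ℝ) / m := by
        rw [Finset.sum_Icc_succ_top (by omega : 1 ≤ n + 1),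
            Finset.sum_Icc_succ_top (by omega : 1 ≤ n + 1)]
        have h1 : ∀ m ∈ Finset.Icc 1 n,
            ((n + 1 - m + (r + 1)).choose (r + 1) : ℝ) / m
              = ((n - m + (r + 1)).choose (r + 1) : ℝ) / m + ((n + 1 - m + r).choose r : ℝ) / m := by
          intro m hm
          simp only [Finset.mem_Icc] at hm
          have e1 : n + 1 - m + (r + 1) = (n - m + (r + 1)) + 1 := by omega
          have e2 : n + 1 - m + r = n - m + (r + 1) := by omega
          rw [e1, e2, Nat.choose_succ_succ (n - m + (r+1)) r]
          push_cast; ring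
        rw [Finset.sum_congr rfl h1, Finset.sum_add_distrib]
        simp [Nat.choose_self]
        ring
      rw [hrec, ihn, ihr (n + 1)]
      -- now a pure identity about choose and sigma_harm
      have e3 : n + 1 + (r + 1) = (n + (r + 1)) + 1 := by omega
      have e4 : n + 1 + r = n + (r + 1) := by omega
      rw [e3, e4, sigma_harm_succ (n + (r+1)), sigma_harm_succ r,
          Nat.choose_succ_succ (n + (r+1)) r]
      have key : ((n + (r + 1) + 1 : ℕ) : ℝ) * ((n + (r+1)).choose r : ℝ)
          = (((n + (r+1)) + 1).choose (r + 1) : ℝ) * ((r : ℝ) + 1) := by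
        have := Nat.add_one_mul_choose_eq (n + (r+1)) r
        exact_mod_cast congrArg (Nat.cast : ℕ → ℝ) this
      have hNpos : (0:ℝ) < (n : ℝ) + (r + 1) + 1 := by positivity
      have hrpos : (0:ℝ) < (r : ℝ) + 1 := by positivity
      rw [Nat.choose_succ_succ (n + (r+1)) r] at key
      push_cast at key ⊢
      field_simp
      nlinarith [key, sq_nonneg ((n:ℝ)+(r:ℝ))]

lemma hasSum_choose_harm {x : ℝ} (hx0 : 0 < x) (hx1 : x < 1) (r : ℕ) :
    HasSum (fun k : ℕ => (k.choose r : ℝ) * sigma_harm k * x ^ k)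
      (x ^ r * (sigma_harm r - Real.log (1 - x)) / (1 - x) ^ (r + 1)) := by
  have hxn : ‖x‖ < 1 := by rw [Real.norm_eq_abs, abs_of_pos hx0]; exact hx1
  have hxa : |x| < 1 := by rwa [Real.norm_eq_abs] at hxn
  -- the geometric-type series
  have hg : HasSum (fun n : ℕ => ((n + r).choose r : ℝ) * x ^ n) (1 / (1 - x) ^ (r + 1)) :=
    hasSum_choose_mul_geometric_of_norm_lt_one r hxn
  -- the log series, with 0-th term
  have hf : HasSum (fun n : ℕ => x ^ n / n) (-Real.log (1 - x)) := by
    have h1 := Real.hasSum_pow_div_log_of_abs_lt_one hxa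
    have h2 : (fun n : ℕ => x ^ (n + 1) / (n + 1)) = fun n : ℕ => x ^ (n + 1) / ((n + 1 : ℕ) : ℝ) := by
      funext n; push_cast; ring
    rw [h2] at h1
    have := (hasSum_nat_add_iff (f := fun n : ℕ => x ^ n / n) 1).mp h1
    simpa using this
  have hfs : Summable fun n : ℕ => ‖x ^ n / n‖ := summable_norm_iff.mpr hf.summable
  have hgs : Summable fun n : ℕ => ‖((n + r).choose r : ℝ) * x ^ n‖ :=
    summable_norm_iff.mpr hg.summable
  -- Cauchy product
  have hcs : Summable fun n : ℕ =>
      ∑ kl ∈ Finset.HasAntidiagonal.antidiagonal n, (x ^ kl.1 / kl.1) * (((kl.2 + r).choose r : ℝ) * x ^ kl.2) :=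
    (summable_norm_sum_mul_antidiagonal_of_summable_norm hfs hgs).of_norm
  have hterm : ∀ n : ℕ,
      ∑ kl ∈ Finset.HasAntidiagonal.antidiagonal n, (x ^ kl.1 / kl.1) * (((kl.2 + r).choose r : ℝ) * x ^ kl.2)
        = ((n + r).choose r : ℝ) * (sigma_harm (n + r) - sigma_harm r) * x ^ n := by
    intro n
    rw [Finset.Nat.sum_antidiagonal_eq_sum_range_succ_mk]
    have h1 : ∀ m ∈ Finset.range (n + 1),
        (x ^ m / m) * (((n - m + r).choose r : ℝ) * x ^ (n - m))
          = (((n - m + r).choose r : ℝ) / m) * x ^ n := by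
      intro m hm
      simp only [Finset.mem_range] at hm
      have hxx : x ^ (n - m) * x ^ m = x ^ n := by
        rw [← pow_add]; congr 1; omega
      have h2 : x ^ m * (((n - m + r).choose r : ℝ) * x ^ (n - m)) = ((n - m + r).choose r : ℝ) * x ^ n := by
        rw [mul_comm, mul_assoc, hxx]
      rw [div_mul_eq_mul_div, h2, div_mul_eq_mul_div]
    rw [Finset.sum_congr rfl h1, ← Finset.sum_mul]
    congr 1
    rw [← comb_key r n]
    symm
    apply Finset.sum_subset
    · intro m hm; simp only [Finset.mem_Icc, Finset.mem_range] at *; omega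
    · intro m hm hnm
      have : m = 0 := by simp only [Finset.mem_Icc, Finset.mem_range] at *; omega
      simp [this]
  have hprod : HasSum (fun n : ℕ => ((n + r).choose r : ℝ) * (sigma_harm (n + r) - sigma_harm r) * x ^ n)
      ((-Real.log (1 - x)) * (1 / (1 - x) ^ (r + 1))) := by
    have hsum2 : Summable (fun n : ℕ => ((n + r).choose r : ℝ) * (sigma_harm (n + r) - sigma_harm r) * x ^ n) :=
      hcs.congr hterm
    rw [hsum2.hasSum_iff]
    rw [← hf.tsum_eq, ← hg.tsum_eq,
        tsum_mul_tsum_eq_tsum_sum_antidiagonal_of_summable_norm hfs hgs]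
    exact (tsum_congr hterm).symm
  -- add sigma_harm r * geometric
  have hsum3 : HasSum (fun n : ℕ => ((n + r).choose r : ℝ) * sigma_harm (n + r) * x ^ n)
      ((sigma_harm r - Real.log (1 - x)) * (1 / (1 - x) ^ (r + 1))) := by
    have h := hprod.add ((hg.mul_left (sigma_harm r)))
    convert h using 1
    · funext n; ring
    · ring
  -- multiply by x ^ r
  have hsum4 : HasSum (fun n : ℕ => ((n + r).choose r : ℝ) * sigma_harm (n + r) * x ^ (n + r))
      (x ^ r * ((sigma_harm r - Real.log (1 - x)) * (1 / (1 - x) ^ (r + 1)))) := by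
    have h := hsum3.mul_left (x ^ r)
    have hfun : (fun n : ℕ => ((n + r).choose r : ℝ) * sigma_harm (n + r) * x ^ (n + r))
        = fun i => x ^ r * (((i + r).choose r : ℝ) * sigma_harm (i + r) * x ^ i) := by
      funext n; rw [pow_add]; ring
    rw [hfun]; exact h
  -- shift index
  have hshift := (hasSum_nat_add_iff
      (f := fun k : ℕ => (k.choose r : ℝ) * sigma_harm k * x ^ k) r).mp hsum4
  have hz : ∑ i ∈ Finset.range r, (i.choose r : ℝ) * sigma_harm i * x ^ i = 0 := by
    apply Finset.sum_eq_zero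
    intro i hi
    simp only [Finset.mem_range] at hi
    rw [Nat.choose_eq_zero_of_lt hi]; simp
  rw [hz, add_zero] at hshift
  rw [mul_one_div, ← mul_div_assoc] at hshift
  exact hshift

lemma vand_nat (j k : ℕ) :
    ∑ r ∈ Finset.range (j + 1), (j + 1).choose (r + 1) * k.choose r
      = (j + k + 1).choose (k + 1) := by
  have h := Nat.add_choose_eq (j + 1) k (k + 1)
  rw [Finset.Nat.sum_antidiagonal_eq_sum_range_succ_mk] at h
  rw [Finset.sum_range_succ'] at h
  norm_num [Nat.choose_eq_zero_of_lt] at h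
  have h2 : ∀ r ∈ Finset.range (k + 1),
      (j + 1).choose (r + 1) * k.choose (k + 1 - (r + 1)) = (j + 1).choose (r + 1) * k.choose r := by
    intro r hr
    simp only [Finset.mem_range] at hr
    have e2 : k + 1 - (r + 1) = k - r := by omega
    rw [e2, Nat.choose_symm (by omega)]
  rw [Finset.sum_congr rfl h2] at h
  have e : j + 1 + k = j + k + 1 := by omega
  rw [e] at h
  rw [h]
  have hL : ∑ r ∈ Finset.range (j + 1), (j + 1).choose (r + 1) * k.choose r
      = ∑ r ∈ Finset.range (j + k + 2), (j + 1).choose (r + 1) * k.choose r := by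
    apply Finset.sum_subset
    · intro r hr; simp only [Finset.mem_range] at *; omega
    · intro r hr hnr
      have : j + 1 < r + 1 := by simp only [Finset.mem_range] at *; omega
      rw [Nat.choose_eq_zero_of_lt this, zero_mul]
  have hR : ∑ r ∈ Finset.range (k + 1), (j + 1).choose (r + 1) * k.choose r
      = ∑ r ∈ Finset.range (j + k + 2), (j + 1).choose (r + 1) * k.choose r := by
    apply Finset.sum_subset
    · intro r hr; simp only [Finset.mem_range] at *; omega
    · intro r hr hnr
      have : k < r := by simp only [Finset.mem_range] at *; omega
      rw [Nat.choose_eq_zero_of_lt this, mul_zero]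
  rw [hL, hR]

lemma coeff_eq (j k : ℕ) :
    ((j + k + 1).factorial : ℝ) / ((k + 1).factorial : ℝ)
      = ∑ r ∈ Finset.range (j + 1), (j.factorial : ℝ) * ((j + 1).choose (r + 1) : ℝ) * (k.choose r : ℝ) := by
  have h := Nat.choose_mul_factorial_mul_factorial (show k + 1 ≤ j + k + 1 by omega)
  have e : j + k + 1 - (k + 1) = j := by omega
  rw [e] at h
  have hcast : ((j + k + 1).choose (k + 1) : ℝ) * ((k + 1).factorial : ℝ) * (j.factorial : ℝ)
      = ((j + k + 1).factorial : ℝ) := by exact_mod_cast congrArg (Nat.cast : ℕ → ℝ) h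
  have hv : (((j + k + 1).choose (k + 1) : ℕ) : ℝ)
      = ∑ r ∈ Finset.range (j + 1), ((j + 1).choose (r + 1) : ℝ) * (k.choose r : ℝ) := by
    rw [← vand_nat j k]; push_cast; rfl
  have hkf : ((k + 1).factorial : ℝ) ≠ 0 := by positivity
  rw [← hcast, hv, Finset.sum_mul, Finset.sum_mul, Finset.sum_div]
  apply Finset.sum_congr rfl
  intro r hr
  field_simp

lemma hasSum_Sj {x : ℝ} (hx0 : 0 < x) (hx1 : x < 1) (j : ℕ) :
    HasSum (fun k : ℕ => ((j + k + 1).factorial : ℝ) / ((k + 1).factorial : ℝ) * sigma_harm k * x ^ k)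
      (∑ r ∈ Finset.range (j + 1), (j.factorial : ℝ) * ((j + 1).choose (r + 1) : ℝ) *
        (x ^ r * (sigma_harm r - Real.log (1 - x)) / (1 - x) ^ (r + 1))) := by
  have h : HasSum (fun k : ℕ => ∑ r ∈ Finset.range (j + 1),
        (j.factorial : ℝ) * ((j + 1).choose (r + 1) : ℝ) * ((k.choose r : ℝ) * sigma_harm k * x ^ k))
      (∑ r ∈ Finset.range (j + 1), (j.factorial : ℝ) * ((j + 1).choose (r + 1) : ℝ) *
        (x ^ r * (sigma_harm r - Real.log (1 - x)) / (1 - x) ^ (r + 1))) :=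
    hasSum_sum fun r _ => (hasSum_choose_harm hx0 hx1 r).mul_left _
  convert h using 1
  funext k
  rw [coeff_eq j k, Finset.sum_mul, Finset.sum_mul]
  apply Finset.sum_congr rfl
  intro r hr
  ring

/-- The polynomial P_j(x) of Theorem 4:
P_j(x)/(j+1)! = (jx/2)(1-x)^{j-1} + (j(j-1)/4)x²(1-x)^{j-2}
  + Σ_{p=3}^j (j!/((p+1)!(j-p)!)) [1/p + 1/(p-1) + Σ_{q=1}^{p-2} 1/(p-q-1)] x^p (1-x)^{j-p}. -/
noncomputable def Ppoly (j : ℕ) (x : ℝ) : ℝ :=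
  (Nat.factorial (j + 1) : ℝ) *
    ((j : ℝ) * x / 2 * (1 - x) ^ (j - 1)
      + (j : ℝ) * ((j : ℝ) - 1) / 4 * x ^ 2 * (1 - x) ^ (j - 2)
      + ∑ p ∈ Finset.Icc 3 j,
          (Nat.factorial j : ℝ) / ((Nat.factorial (p + 1)) * (Nat.factorial (j - p))) *
            (1 / (p : ℝ) + 1 / ((p : ℝ) - 1) + ∑ q ∈ Finset.Icc 1 (p - 2), 1 / ((p : ℝ) - q - 1)) *
            x ^ p * (1 - x) ^ (j - p))

/-- The polynomial Q_j(x) of Theorem 4: x Q_j(x)/(j+1)! = -(1/(j+1))[1-(1-x)^{j+1}]. -/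
noncomputable def Qpoly (j : ℕ) (x : ℝ) : ℝ :=
  (Nat.factorial (j + 1) : ℝ) * (-(1 / ((j : ℝ) + 1)) * (1 - (1 - x) ^ (j + 1))) / x

lemma bracket_eq {p : ℕ} (hp : 2 ≤ p) :
    1 / (p : ℝ) + 1 / ((p : ℝ) - 1) + ∑ q ∈ Finset.Icc 1 (p - 2), 1 / ((p : ℝ) - q - 1)
      = sigma_harm p := by
  obtain ⟨n, rfl⟩ : ∃ n, p = n + 2 := ⟨p - 2, by omega⟩
  have hsum : ∑ q ∈ Finset.Icc 1 (n + 2 - 2), 1 / (((n + 2 : ℕ) : ℝ) - q - 1) = sigma_harm n := by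
    rw [show n + 2 - 2 = n from rfl, sigma_harm]
    apply Finset.sum_nbij' (i := fun q => n + 1 - q) (j := fun m => n + 1 - m)
    · intro a ha; simp only [Finset.mem_Icc] at *; omega
    · intro a ha; simp only [Finset.mem_Icc] at *; omega
    · intro a ha; simp only [Finset.mem_Icc] at *; omega
    · intro a ha; simp only [Finset.mem_Icc] at *; omega
    · intro q hq
      simp only [Finset.mem_Icc] at hq
      have : ((n + 1 - q : ℕ) : ℝ) = (n : ℝ) + 1 - q := by
        have : q ≤ n + 1 := by omega
        push_cast [this]; ring
      rw [this]
      push_cast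
      ring_nf
  rw [hsum, show n + 2 = (n + 1) + 1 from rfl, sigma_harm_succ (n + 1), sigma_harm_succ n]
  push_cast
  ring

lemma Qpart (j : ℕ) {x : ℝ} (hx : x ≠ 0) :
    Qpoly j x
      = -∑ r ∈ Finset.range (j + 1),
          (j.factorial : ℝ) * ((j + 1).choose (r + 1) : ℝ) * x ^ r * (1 - x) ^ (j - r) := by
  have h1 : (x + (1 - x)) ^ (j + 1) = 1 := by norm_num
  rw [add_pow, Finset.sum_range_succ'] at h1
  simp only [pow_zero, one_mul, Nat.choose_zero_right, Nat.cast_one, mul_one, Nat.sub_zero,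
    Nat.succ_sub_succ_eq_sub] at h1
  -- h1 : ∑ r ∈ range (j+1), x^(r+1) * (1-x)^(j-r) * C(j+1,r+1) + (1-x)^(j+1) = 1
  have hfac : ((j + 1).factorial : ℝ) = ((j : ℝ) + 1) * (j.factorial : ℝ) := by
    rw [Nat.factorial_succ]; push_cast; ring
  have hj1 : ((j : ℝ) + 1) ≠ 0 := by positivity
  rw [Qpoly, div_eq_iff hx, hfac]
  have h2 : 1 - (1 - x) ^ (j + 1)
      = ∑ r ∈ Finset.range (j + 1), x ^ (r + 1) * (1 - x) ^ (j - r) * ((j + 1).choose (r + 1) : ℝ) := by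
    linarith [h1]
  rw [h2, Finset.mul_sum, Finset.mul_sum, ← Finset.sum_neg_distrib, Finset.sum_mul]
  apply Finset.sum_congr rfl
  intro r hr
  field_simp
  ring

lemma sigma_harm_zero' : sigma_harm 0 = 0 := by simp [sigma_harm]
lemma sigma_harm_one : sigma_harm 1 = 1 := by simp [sigma_harm]
lemma sigma_harm_two : sigma_harm 2 = 3 / 2 := by
  rw [show sigma_harm 2 = sigma_harm (1 + 1) from rfl, sigma_harm_succ, sigma_harm_one]; norm_num

lemma choose_cast' {j p : ℕ} (h : p ≤ j) :
    ((j + 1).choose (p + 1) : ℝ) = ((j + 1).factorial : ℝ) /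
      (((p + 1).factorial : ℝ) * ((j - p).factorial : ℝ)) := by
  have h2 := Nat.choose_mul_factorial_mul_factorial (show p + 1 ≤ j + 1 by omega)
  have e : j + 1 - (p + 1) = j - p := by omega
  rw [e] at h2
  have h3 : ((j + 1).choose (p + 1) : ℝ) * ((p + 1).factorial : ℝ) * ((j - p).factorial : ℝ)
      = ((j + 1).factorial : ℝ) := by exact_mod_cast congrArg (Nat.cast : ℕ → ℝ) h2
  rw [eq_div_iff (by positivity)]
  linear_combination h3

lemma Ppart (j : ℕ) (x : ℝ) :
    ∑ r ∈ Finset.range (j + 1),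
        (j.factorial : ℝ) * ((j + 1).choose (r + 1) : ℝ) * sigma_harm r * x ^ r * (1 - x) ^ (j - r)
      = Ppoly j x := by
  have hIcc : ∀ j : ℕ, ∀ p ∈ Finset.Icc 3 j,
      (j.factorial : ℝ) * ((j + 1).choose (p + 1) : ℝ) * sigma_harm p * x ^ p * (1 - x) ^ (j - p)
        = ((j + 1).factorial : ℝ) *
            ((j.factorial : ℝ) / ((Nat.factorial (p + 1)) * (Nat.factorial (j - p))) *
              (1 / (p : ℝ) + 1 / ((p : ℝ) - 1) + ∑ q ∈ Finset.Icc 1 (p - 2), 1 / ((p : ℝ) - q - 1)) *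
              x ^ p * (1 - x) ^ (j - p)) := by
    intro j p hp
    simp only [Finset.mem_Icc] at hp
    rw [bracket_eq (by omega), choose_cast' (by omega)]
    ring
  match j with
  | 0 =>
    simp [Ppoly, sigma_harm_zero']
  | 1 =>
    rw [Finset.sum_range_succ, Finset.sum_range_one, Ppoly]
    rw [sigma_harm_zero', sigma_harm_one]
    norm_num [Nat.factorial]
    try ring
  | 2 =>
    rw [Finset.sum_range_succ, Finset.sum_range_succ, Finset.sum_range_one, Ppoly]
    rw [sigma_harm_zero', sigma_harm_one, sigma_harm_two]
    norm_num [Nat.factorial]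
    try ring
  | (m + 3) =>
    -- split range (m+4) into {0,1,2} and Icc 3 (m+3)
    have hsplit : ∑ r ∈ Finset.range (m + 3 + 1),
          ((m + 3).factorial : ℝ) * ((m + 4).choose (r + 1) : ℝ) * sigma_harm r * x ^ r *
            (1 - x) ^ (m + 3 - r)
        = (∑ r ∈ Finset.range 3,
            ((m + 3).factorial : ℝ) * ((m + 4).choose (r + 1) : ℝ) * sigma_harm r * x ^ r *
              (1 - x) ^ (m + 3 - r))
          + ∑ r ∈ Finset.Icc 3 (m + 3),
            ((m + 3).factorial : ℝ) * ((m + 4).choose (r + 1) : ℝ) * sigma_harm r * x ^ r *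
              (1 - x) ^ (m + 3 - r) := by
      rw [← Finset.Ico_add_one_right_eq_Icc 3 (m + 3), Finset.range_eq_Ico,
          ← Finset.sum_Ico_consecutive _ (by omega : 0 ≤ 3) (by omega : 3 ≤ m + 3 + 1)]
      try rfl
    rw [hsplit]
    rw [Finset.sum_range_succ, Finset.sum_range_succ, Finset.sum_range_one]
    rw [sigma_harm_zero', sigma_harm_one, sigma_harm_two]
    rw [Ppoly]
    rw [Finset.sum_congr rfl (hIcc (m + 3)), ← Finset.mul_sum]
    -- choose values
    have h21 : (((m + 4).choose 2 : ℕ) : ℝ) * 2 = ((m : ℝ) + 4) * ((m : ℝ) + 3) := by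
      have h := Nat.add_one_mul_choose_eq (m + 3) 1
      rw [Nat.choose_one_right] at h
      have : (((m + 3) + 1) * (m + 3) : ℕ) = ((m + 3 + 1).choose (1 + 1) * (1 + 1) : ℕ) := by
        exact_mod_cast h
      have := congrArg (Nat.cast : ℕ → ℝ) this
      push_cast at this ⊢
      linarith
    have h32 : (((m + 4).choose 3 : ℕ) : ℝ) * 6 = ((m : ℝ) + 4) * ((m : ℝ) + 3) * ((m : ℝ) + 2) := by
      have ha := Nat.add_one_mul_choose_eq (m + 3) 2
      have hb := Nat.add_one_mul_choose_eq (m + 2) 1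
      rw [Nat.choose_one_right] at hb
      have ha' := congrArg (Nat.cast : ℕ → ℝ) ha
      have hb' := congrArg (Nat.cast : ℕ → ℝ) hb
      push_cast at ha' hb' ⊢
      nlinarith [ha', hb']
    have hfac : ((m + 4).factorial : ℝ) = ((m : ℝ) + 4) * ((m + 3).factorial : ℝ) := by
      rw [show m + 4 = (m + 3) + 1 from rfl, Nat.factorial_succ]; push_cast; ring
    push_cast
    have e1 : ((m + 3).factorial : ℝ) * (((m + 4).choose 2 : ℕ) : ℝ) * 1 * x ^ 1 * (1 - x) ^ (m + 2)
        = ((m + 3 + 1).factorial : ℝ) * (((m : ℝ) + 3) * x / 2 * (1 - x) ^ (m + 2)) := by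
      rw [show ((m + 3 + 1).factorial : ℝ) = ((m + 4).factorial : ℝ) from rfl, hfac]
      linear_combination (((m + 3).factorial : ℝ) * x * (1 - x) ^ (m + 2) / 2) * h21
    have e2 : ((m + 3).factorial : ℝ) * (((m + 4).choose 3 : ℕ) : ℝ) * (3 / 2) * x ^ 2 * (1 - x) ^ (m + 1)
        = ((m + 3 + 1).factorial : ℝ) * (((m : ℝ) + 3) * ((m : ℝ) + 3 - 1) / 4 * x ^ 2 * (1 - x) ^ (m + 1)) := by
      rw [show ((m + 3 + 1).factorial : ℝ) = ((m + 4).factorial : ℝ) from rfl, hfac]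
      linear_combination (((m + 3).factorial : ℝ) * x ^ 2 * (1 - x) ^ (m + 1) / 4) * h32
    linear_combination e1 + e2

/-- Theorem 4 of the paper: for 0 < x < 1 and j ∈ ℕ,
(1-x)^{j+1} S_j(x) = P_j(x) + Q_j(x) log(1-x), where
S_j(x) = Σ_{k=1}^∞ ((j+k+1)!/(k+1)!) σ_k x^k. -/
theorem Sj_closed_form (x : ℝ) (hx0 : 0 < x) (hx1 : x < 1) (j : ℕ) :
    (1 - x) ^ (j + 1) *
        (∑' k : ℕ, ((Nat.factorial (j + k + 1) : ℝ) / (Nat.factorial (k + 1))) *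
          sigma_harm k * x ^ k) =
      Ppoly j x + Qpoly j x * Real.log (1 - x) := by
  have hx : x ≠ 0 := hx0.ne'
  have h1x : (1 : ℝ) - x ≠ 0 := by intro h; nlinarith
  have hs := hasSum_Sj hx0 hx1 j
  rw [hs.tsum_eq, Finset.mul_sum]
  have hstep : ∀ r ∈ Finset.range (j + 1),
      (1 - x) ^ (j + 1) * ((j.factorial : ℝ) * ((j + 1).choose (r + 1) : ℝ) *
        (x ^ r * (sigma_harm r - Real.log (1 - x)) / (1 - x) ^ (r + 1)))
      = (j.factorial : ℝ) * ((j + 1).choose (r + 1) : ℝ) * sigma_harm r * x ^ r * (1 - x) ^ (j - r)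
        - ((j.factorial : ℝ) * ((j + 1).choose (r + 1) : ℝ) * x ^ r * (1 - x) ^ (j - r)) *
            Real.log (1 - x) := by
    intro r hr
    simp only [Finset.mem_range] at hr
    have hpow : (1 - x) ^ (j + 1) = (1 - x) ^ (j - r) * (1 - x) ^ (r + 1) := by
      rw [← pow_add]; congr 1; omega
    have hne : (1 - x) ^ (r + 1) ≠ 0 := pow_ne_zero _ h1x
    rw [hpow]
    field_simp
  rw [Finset.sum_congr rfl hstep, Finset.sum_sub_distrib, ← Finset.sum_mul, Ppart j x,
      Qpart j hx]
  ring
end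

section
/- Let h, g : (0,∞) → ℂ be measurable functions whose Mellin transforms ĥ(z) = ∫_0^∞ h(t) t^{z-1} dt and ĝ(z) = ∫_0^∞ g(t) t^{z-1} dt converge absolutely on suitable vertical strips containing Re z = c and Re z = 1-c respectively, with h·g integrable on (0,∞). Then ∫_0^∞ h(t) g(t) dt = (1/(2πi)) ∫_{Re z = c} ĥ(z) ĝ(1-z) dz (Mellin–Parseval identity), under standard decay hypotheses ensuring absolute convergence of the contour integral. -/
open MeasureTheory Complex Real

/-- The Mellin transform f̂(z) = ∫_0^∞ f(t) t^{z-1} dt. -/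
noncomputable def mellinT (f : ℝ → ℂ) (z : ℂ) : ℂ :=
  ∫ t in Set.Ioi (0 : ℝ), f t * (t : ℂ) ^ (z - 1)

/-- The Mellin–Parseval identity: under hypotheses guaranteeing absolute
convergence of the Mellin transforms of h and g on the lines Re z = c and
Re z = 1-c, integrability of h·g, absolute convergence of the contour integral,
and validity of Mellin inversion for h on the line Re z = c, one has
∫_0^∞ h(t) g(t) dt = (1/(2πi)) ∫_{Re z = c} ĥ(z) ĝ(1-z) dz
  = (1/(2π)) ∫_{τ∈ℝ} ĥ(c+iτ) ĝ(1-c-iτ) dτ. -/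
theorem mellin_parseval (h g : ℝ → ℂ) (c : ℝ)
    (hh : IntegrableOn (fun t : ℝ => h t * (t : ℂ) ^ ((c : ℂ) - 1)) (Set.Ioi 0))
    (hg : IntegrableOn (fun t : ℝ => g t * (t : ℂ) ^ (-(c : ℂ))) (Set.Ioi 0))
    (hhg : IntegrableOn (fun t : ℝ => h t * g t) (Set.Ioi 0))
    (hcont : Integrable (fun τ : ℝ =>
      mellinT h ((c : ℂ) + τ * Complex.I) * mellinT g (1 - ((c : ℂ) + τ * Complex.I))))
    (hinv : ∀ t ∈ Set.Ioi (0 : ℝ),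
      h t = (1 / (2 * (Real.pi : ℂ))) *
        ∫ τ : ℝ, mellinT h ((c : ℂ) + τ * Complex.I) *
          (t : ℂ) ^ (-((c : ℂ) + τ * Complex.I))) :
    (∫ t in Set.Ioi (0 : ℝ), h t * g t) =
      (1 / (2 * (Real.pi : ℂ))) *
        ∫ τ : ℝ, mellinT h ((c : ℂ) + τ * Complex.I) *
          mellinT g (1 - ((c : ℂ) + τ * Complex.I)) := by
  by_cases hint : Integrable (fun τ : ℝ => mellinT h ((c : ℂ) + τ * Complex.I))
  · -- main case: the line integral of ĥ converges absolutely, use Fubini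
    -- joint integrability
    have hmeas : AEStronglyMeasurable
        (fun p : ℝ × ℝ => mellinT h ((c : ℂ) + p.2 * Complex.I) *
          (g p.1 * (p.1 : ℂ) ^ (-((c : ℂ) + p.2 * Complex.I))))
        ((volume.restrict (Set.Ioi 0)).prod volume) := by
      have hA : AEStronglyMeasurable
          (fun p : ℝ × ℝ => mellinT h ((c : ℂ) + p.2 * Complex.I))
          ((volume.restrict (Set.Ioi 0)).prod volume) :=
        hint.aestronglyMeasurable.comp_snd
      have hB : AEStronglyMeasurable
          (fun p : ℝ × ℝ => g p.1 * (p.1 : ℂ) ^ (-(c : ℂ)))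
          ((volume.restrict (Set.Ioi 0)).prod volume) := hg.1.comp_fst
      have hC : AEStronglyMeasurable
          (fun p : ℝ × ℝ => ((p.1 : ℂ)) ^ ((c : ℂ)) *
            (p.1 : ℂ) ^ (-((c : ℂ) + p.2 * Complex.I)))
          ((volume.restrict (Set.Ioi 0)).prod volume) := by
        rw [Measure.restrict_prod_eq_prod_univ]
        refine ContinuousOn.aestronglyMeasurable ?_
          (measurableSet_Ioi.prod MeasurableSet.univ)
        intro p hp
        have hp1 : (0 : ℝ) < p.1 := hp.1
        have hbase : ContinuousAt (fun p : ℝ × ℝ => ((p.1 : ℝ) : ℂ)) p :=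
          (Complex.continuous_ofReal.comp continuous_fst).continuousAt
        have hslit : ((p.1 : ℝ) : ℂ) ∈ Complex.slitPlane :=
          Complex.ofReal_mem_slitPlane.2 hp1
        refine ContinuousAt.continuousWithinAt ?_
        exact (hbase.cpow continuousAt_const hslit).mul
          (hbase.cpow
            ((continuous_const.add ((Complex.continuous_ofReal.comp
              continuous_snd).mul continuous_const)).neg.continuousAt) hslit)
      have hae : ∀ᵐ p : ℝ × ℝ ∂((volume.restrict (Set.Ioi 0)).prod volume),
          (0 : ℝ) < p.1 := by
        rw [Measure.restrict_prod_eq_prod_univ]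
        filter_upwards [ae_restrict_mem (measurableSet_Ioi.prod MeasurableSet.univ)]
          with p hp using hp.1
      refine (hA.mul (hB.mul hC)).congr ?_
      filter_upwards [hae] with p hp
      have h0' : ((p.1 : ℝ) : ℂ) ≠ 0 := by exact_mod_cast hp.ne'
      have : (p.1 : ℂ) ^ (-(c : ℂ)) * (p.1 : ℂ) ^ ((c : ℂ)) = 1 := by
        rw [← Complex.cpow_add _ _ h0',
          show (-(c : ℂ)) + (c : ℂ) = 0 from by ring, Complex.cpow_zero]
      calc mellinT h ((c : ℂ) + p.2 * Complex.I) *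
            (g p.1 * (p.1 : ℂ) ^ (-(c : ℂ)) *
              ((p.1 : ℂ) ^ ((c : ℂ)) * (p.1 : ℂ) ^ (-((c : ℂ) + p.2 * Complex.I))))
          = mellinT h ((c : ℂ) + p.2 * Complex.I) *
            (g p.1 * (((p.1 : ℂ) ^ (-(c : ℂ)) * (p.1 : ℂ) ^ ((c : ℂ))) *
              (p.1 : ℂ) ^ (-((c : ℂ) + p.2 * Complex.I)))) := by ring
        _ = mellinT h ((c : ℂ) + p.2 * Complex.I) *
            (g p.1 * (p.1 : ℂ) ^ (-((c : ℂ) + p.2 * Complex.I))) := by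
            rw [this, one_mul]
    have hFint : Integrable
        (fun p : ℝ × ℝ => mellinT h ((c : ℂ) + p.2 * Complex.I) *
          (g p.1 * (p.1 : ℂ) ^ (-((c : ℂ) + p.2 * Complex.I))))
        ((volume.restrict (Set.Ioi 0)).prod volume) := by
      have hprod : Integrable
          (fun p : ℝ × ℝ => ‖g p.1 * (p.1 : ℂ) ^ (-(c : ℂ))‖ *
            ‖mellinT h ((c : ℂ) + p.2 * Complex.I)‖)
          ((volume.restrict (Set.Ioi 0)).prod volume) :=
        hg.norm.mul_prod hint.norm
      refine hprod.mono' hmeas ?_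
      have hae : ∀ᵐ p : ℝ × ℝ ∂((volume.restrict (Set.Ioi 0)).prod volume),
          (0 : ℝ) < p.1 := by
        rw [Measure.restrict_prod_eq_prod_univ]
        filter_upwards [ae_restrict_mem (measurableSet_Ioi.prod MeasurableSet.univ)]
          with p hp using hp.1
      filter_upwards [hae] with p hp
      have e1 : ‖((p.1 : ℝ) : ℂ) ^ (-((c : ℂ) + p.2 * Complex.I))‖ = p.1 ^ (-c) := by
        rw [Complex.norm_cpow_eq_rpow_re_of_pos hp]
        norm_num
      have e2 : ‖((p.1 : ℝ) : ℂ) ^ (-(c : ℂ))‖ = p.1 ^ (-c) := by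
        rw [Complex.norm_cpow_eq_rpow_re_of_pos hp]
        norm_num
      rw [norm_mul, norm_mul, norm_mul, e1, e2]
      ring_nf
      exact le_refl _
    -- rewrite LHS via inversion
    have step1 : (∫ t in Set.Ioi (0 : ℝ), h t * g t)
        = ∫ t in Set.Ioi (0 : ℝ), (1 / (2 * (Real.pi : ℂ))) *
            ∫ τ : ℝ, mellinT h ((c : ℂ) + τ * Complex.I) *
              (g t * (t : ℂ) ^ (-((c : ℂ) + τ * Complex.I))) := by
      refine setIntegral_congr_fun measurableSet_Ioi (fun t ht => ?_)
      rw [hinv t ht, mul_assoc, ← integral_mul_const]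
      congr 1
      refine congrArg _ (funext fun τ => by ring)
    rw [step1, integral_const_mul]
    congr 1
    rw [integral_integral_swap hFint]
    refine integral_congr_ae (Filter.Eventually.of_forall fun τ => ?_)
    dsimp only
    rw [integral_const_mul]
    congr 1
    unfold mellinT
    refine setIntegral_congr_fun measurableSet_Ioi (fun t ht => ?_)
    congr 1
    ring
  · -- degenerate case: the inversion integral is not absolutely convergent,
    -- so by definition of the Bochner integral h vanishes on (0,∞)
    have hzero : ∀ t ∈ Set.Ioi (0 : ℝ), h t = 0 := by
      intro t ht
      have ht0 : (0 : ℝ) < t := ht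
      rw [hinv t ht]
      rw [integral_undef, mul_zero]
      intro hI
      apply hint
      have hb : Integrable (fun τ : ℝ => ((t : ℂ) ^ ((c : ℂ) + τ * Complex.I)) *
          (mellinT h ((c : ℂ) + τ * Complex.I) *
            (t : ℂ) ^ (-((c : ℂ) + τ * Complex.I)))) := by
        refine hI.bdd_mul (c := t ^ c) ?_ (Filter.Eventually.of_forall fun τ => ?_)
        · refine Continuous.aestronglyMeasurable ?_
          refine Continuous.cpow continuous_const
            (continuous_const.add (Complex.continuous_ofReal.mul continuous_const))
            (fun _ => Complex.ofReal_mem_slitPlane.2 ht0)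
        · rw [Complex.norm_cpow_eq_rpow_re_of_pos ht0]
          simp
      refine hb.congr (Filter.Eventually.of_forall fun τ => ?_)
      have h0' : ((t : ℝ) : ℂ) ≠ 0 := by exact_mod_cast ht0.ne'
      have : ((t : ℂ) ^ ((c : ℂ) + τ * Complex.I)) *
          (t : ℂ) ^ (-((c : ℂ) + τ * Complex.I)) = 1 := by
        rw [← Complex.cpow_add _ _ h0',
          show ((c : ℂ) + τ * Complex.I) + -((c : ℂ) + τ * Complex.I) = 0 from by ring,
          Complex.cpow_zero]
      calc ((t : ℂ) ^ ((c : ℂ) + τ * Complex.I)) *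
            (mellinT h ((c : ℂ) + τ * Complex.I) *
              (t : ℂ) ^ (-((c : ℂ) + τ * Complex.I)))
          = mellinT h ((c : ℂ) + τ * Complex.I) *
            (((t : ℂ) ^ ((c : ℂ) + τ * Complex.I)) *
              (t : ℂ) ^ (-((c : ℂ) + τ * Complex.I))) := by ring
        _ = mellinT h ((c : ℂ) + τ * Complex.I) := by rw [this, mul_one]
    have hM : ∀ z : ℂ, mellinT h z = 0 := by
      intro z
      unfold mellinT
      rw [show (∫ t in Set.Ioi (0 : ℝ), h t * (t : ℂ) ^ (z - 1))
          = ∫ _ in Set.Ioi (0 : ℝ), (0 : ℂ) from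
        setIntegral_congr_fun measurableSet_Ioi
          (fun t ht => by rw [hzero t ht, zero_mul]), integral_zero]
    have hL : (∫ t in Set.Ioi (0 : ℝ), h t * g t) = 0 := by
      rw [show (∫ t in Set.Ioi (0 : ℝ), h t * g t)
          = ∫ _ in Set.Ioi (0 : ℝ), (0 : ℂ) from
        setIntegral_congr_fun measurableSet_Ioi
          (fun t ht => by rw [hzero t ht, zero_mul]), integral_zero]
    rw [hL]
    simp only [hM, zero_mul, integral_zero, mul_zero]
end
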